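/- Let A be a C*-algebra regarded as a real vector space in duality with its dual A' via ⟨a,φ⟩ := Re φ(a). Then the one-sided polar of the positive cone A₊ is (A₊)° = −A₊' + i·(A')_sa, where A₊' is the cone of positive functionals and (A')_sa the real subspace of self-adjoint functionals. -/

import Mathlib

open Pointwise ComplexOrder

/-- The "adjoint" functional `a ↦ conj (φ (star a))`. -/
noncomputable def adjCLM {A : Type*} [NormedRing A] [StarRing A] [CStarRing A]
    [NormedAlgebra ℂ A] [StarModule ℂ A] (φ : A →L[ℂ] ℂ) : A →L[ℂ] ℂ where
  toFun a := starRingEnd ℂ (φ (star a))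
  map_add' a b := by simp
  map_smul' c a := by simp [star_smul]
  cont := Complex.continuous_conj.comp (φ.continuous.comp continuous_star)

@[simp] lemma adjCLM_apply {A : Type*} [NormedRing A] [StarRing A] [CStarRing A]
    [NormedAlgebra ℂ A] [StarModule ℂ A] (φ : A →L[ℂ] ℂ) (a : A) :
    adjCLM φ a = starRingEnd ℂ (φ (star a)) := rfl

/-- For a C*-algebra `A` in duality with its dual via `⟨a,φ⟩ = Re φ(a)`,
the one-sided polar of the positive cone `A₊ = {a*a}` equals `-A₊' + i·(A')ₛₐ`, where
`A₊'` is the cone of positive functionals and `(A')ₛₐ` the self-adjoint functionals. -/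
theorem polar_positive_cone_cstar
    {A : Type*} [NormedRing A] [StarRing A] [CStarRing A] [CompleteSpace A]
    [NormedAlgebra ℂ A] [StarModule ℂ A] :
    {φ : A →L[ℂ] ℂ | ∀ x ∈ {x : A | ∃ a : A, x = star a * a}, (φ x).re ≤ 1} =
      (-{φ : A →L[ℂ] ℂ | ∀ a : A, 0 ≤ φ (star a * a)}) +
        Complex.I • {φ : A →L[ℂ] ℂ | ∀ a : A, φ (star a) = starRingEnd ℂ (φ a)} := by
  ext φ
  simp only [Set.mem_setOf_eq, Set.mem_add, Set.mem_neg, Set.mem_smul_set]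
  constructor
  · intro h
    have h0 : ∀ a : A, (φ (star a * a)).re ≤ 0 := by
      intro a
      by_contra hc
      push_neg at hc
      set r := (φ (star a * a)).re with hr
      set t : ℝ := Real.sqrt (2 / r) with ht
      have key := h (star ((t:ℂ) • a) * ((t:ℂ) • a)) ⟨(t:ℂ) • a, rfl⟩
      have hst : star ((t:ℂ) • a) * ((t:ℂ) • a) = ((t:ℂ) * (t:ℂ)) • (star a * a) := by
        rw [star_smul, smul_mul_smul_comm]
        simp
      rw [hst, map_smul] at key
      have htt : t * t = 2 / r := Real.mul_self_sqrt (by positivity)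
      have hre : (((t:ℂ) * (t:ℂ)) • φ (star a * a)).re = (t * t) * r := by
        simp [smul_eq_mul, Complex.mul_re, Complex.ofReal_mul]
        exact Or.inl rfl
      rw [hre, htt, div_mul_cancel₀ _ (ne_of_gt hc)] at key
      linarith
    refine ⟨(2:ℂ)⁻¹ • (φ + adjCLM φ), ?_, Complex.I • ((2*Complex.I)⁻¹ • (φ - adjCLM φ)),
      ⟨_, ?_, rfl⟩, ?_⟩
    · intro a
      have hv : (-((2:ℂ)⁻¹ • (φ + adjCLM φ))) (star a * a)
          = (↑(-(φ (star a * a)).re) : ℂ) := by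
        simp only [ContinuousLinearMap.neg_apply, ContinuousLinearMap.smul_apply,
          ContinuousLinearMap.add_apply, adjCLM_apply, star_mul, star_star, smul_eq_mul]
        rw [Complex.add_conj]
        push_cast
        ring
      rw [hv]
      rw [Complex.zero_le_real]
      linarith [h0 a]
    · intro a
      simp only [ContinuousLinearMap.smul_apply, ContinuousLinearMap.sub_apply, adjCLM_apply,
        star_star, smul_eq_mul, map_mul, map_sub, map_inv₀, Complex.conj_conj, map_ofNat,
        Complex.conj_I]
      ring
    · ext a
      simp only [ContinuousLinearMap.add_apply, ContinuousLinearMap.smul_apply,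
        ContinuousLinearMap.sub_apply, adjCLM_apply, smul_eq_mul]
      field_simp
      ring
  · rintro ⟨ψ, hψ, _, ⟨χ, hχ, rfl⟩, rfl⟩
    intro x hx
    obtain ⟨a, rfl⟩ := hx
    have hpos := hψ a
    have hre : (ψ (star a * a)).re ≤ 0 := by
      rw [Complex.le_def] at hpos
      have := hpos.1
      simp only [Complex.zero_re, ContinuousLinearMap.neg_apply, Complex.neg_re] at this
      linarith
    have hχa : (χ (star a * a)).im = 0 := by
      have h2 := hχ (star a * a)
      rw [star_mul, star_star] at h2
      exact Complex.conj_eq_iff_im.mp h2.symm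
    simp only [ContinuousLinearMap.add_apply, ContinuousLinearMap.smul_apply, smul_eq_mul,
      Complex.add_re, Complex.mul_re, Complex.I_re, Complex.I_im, hχa]
    nlinarith
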